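/- Let S be an acyclic multiset of pebbling moves on a weighted graph G_ω. Then the elements of S can be listed as a regular sequence s = (s_1,…,s_n). Moreover, if S is balanced with a pebble distribution p, then this regular sequence s is executable from p. -/

import Mathlib

open Finset

variable {V : Type*}

/-- Applying the pebbling move `m = (v, u)` on `G_ω`: remove `ω v u` pebbles at `v`
and add one pebble at `u`. -/
def moveFn [DecidableEq V] (ω : V → V → ℕ) (m : V × V) (p : V → ℤ) : V → ℤ :=
  fun w => if w = m.1 then p m.1 - ω m.1 m.2 else if w = m.2 then p m.2 + 1 else p w

/-- The pebble function obtained after applying a sequence of pebbling moves. -/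
def applyList [DecidableEq V] (ω : V → V → ℕ) : List (V × V) → (V → ℤ) → (V → ℤ)
  | [], p => p
  | m :: l, p => applyList ω l (moveFn ω m p)

/-- A pebbling sequence is executable from `p` if every move is along an edge of `G`
and every intermediate pebble function is nonnegative. -/
def Executable [DecidableEq V] (G : SimpleGraph V) (ω : V → V → ℕ) :
    (V → ℤ) → List (V × V) → Prop
  | _, [] => True
  | p, m :: l => G.Adj m.1 m.2 ∧ (∀ w, 0 ≤ moveFn ω m p w) ∧ Executable G ω (moveFn ω m p) l

/-- `x` is `t`-reachable from `p` on the weighted graph `G_ω`. -/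
def Reaches [DecidableEq V] (G : SimpleGraph V) (ω : V → V → ℕ) (p : V → ℤ) (x : V)
    (t : ℕ) : Prop :=
  ∃ l : List (V × V), Executable G ω p l ∧ (t : ℤ) ≤ applyList ω l p x

/-- A pebble distribution is a nonnegative pebble function. -/
def IsDistrib (p : V → ℤ) : Prop := ∀ v, 0 ≤ p v

/-- The size of a pebble distribution: the total number of pebbles. -/
def size [Fintype V] (p : V → ℤ) : ℤ := ∑ v, p v

/-- The `t`-pebbling number `π_t(G_ω, x)`: the least `m` such that `x` is `t`-reachable
from every pebble distribution of size `m`. -/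
noncomputable def piT [Fintype V] [DecidableEq V] (G : SimpleGraph V) (ω : V → V → ℕ)
    (x : V) (t : ℕ) : ℕ :=
  sInf {m : ℕ | ∀ p : V → ℤ, IsDistrib p → size p = (m : ℤ) → Reaches G ω p x t}

/-- `p_S` for a multiset `S` of pebbling moves:
`p_S(w) = p(w) + d⁻(w) − ∑ ω(w,u)` over arcs leaving `w`. -/
def applyMS [DecidableEq V] (ω : V → V → ℕ) (S : Multiset (V × V)) (p : V → ℤ) : V → ℤ :=
  fun w => p w + (Multiset.card (S.filter (fun m => m.2 = w)) : ℤ)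
    - ((S.filter (fun m => m.1 = w)).map (fun m => (ω m.1 m.2 : ℤ))).sum

/-- The transition digraph of `S` contains a directed cycle. -/
def HasCycle (S : Multiset (V × V)) : Prop :=
  ∃ l : List (V × V), l ≠ [] ∧ (l : Multiset (V × V)) ≤ S ∧
    List.Chain' (fun a b => a.2 = b.1) l ∧
    l.getLast?.map Prod.snd = l.head?.map Prod.fst

/-- A multiset of pebbling moves is acyclic if its transition digraph has no directed cycle. -/
def Acyclic (S : Multiset (V × V)) : Prop := ¬HasCycle S

/-- A list of pebbling moves is regular if each move is an initial move of the multiset of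
remaining moves: the source of each move has in-degree zero among the remaining moves. -/
def RegularSeq : List (V × V) → Prop
  | [] => True
  | m :: l => (∀ m' ∈ m :: l, m'.2 ≠ m.1) ∧ RegularSeq l

lemma cycle_of_repeat {S : Multiset (V × V)} {l : List (V × V)} {h m' : V × V}
    (hle : (↑l : Multiset (V × V)) ≤ S)
    (hch : List.Chain' (fun a b => a.2 = b.1) l)
    (hhead : l.head? = some h) (hm : m' ∈ l) (h2 : m'.2 = h.1) : HasCycle S := by
  obtain ⟨l₁, l₂, rfl⟩ := List.append_of_mem hm
  refine ⟨l₁ ++ [m'], by simp, ?_, ?_, ?_⟩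
  · refine le_trans ?_ hle
    have hsub : List.Sublist (l₁ ++ [m']) (l₁ ++ m' :: l₂) := by
      apply List.Sublist.append_left
      simp
    exact Multiset.coe_le.mpr hsub.subperm
  · have : l₁ ++ m' :: l₂ = (l₁ ++ [m']) ++ l₂ := by simp
    rw [this] at hch
    exact (List.isChain_append.mp hch).1
  · have hlast : (l₁ ++ [m']).getLast? = some m' := by
      simp [List.getLast?_concat]
    cases l₁ with
    | nil =>
      simp at hhead
      rw [hlast]
      simp [h2, ← hhead]
    | cons a t =>
      have hh : ((a :: t) ++ [m']).head? = some a := by simp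
      have hh2 : a = h := by simpa using hhead
      rw [hlast, hh, hh2]
      simp [h2]

lemma exists_initial [DecidableEq V] {S : Multiset (V × V)} (hne : S ≠ 0) (hacyc : ¬ HasCycle S) :
    ∃ m ∈ S, ∀ m' ∈ S, m'.2 ≠ m.1 := by
  by_contra hcon
  push_neg at hcon
  apply hacyc
  obtain ⟨m₀, hm₀⟩ := Multiset.exists_mem_of_ne_zero hne
  have key : ∀ n (l : List (V × V)), l ≠ [] → (↑l : Multiset (V × V)) ≤ S →
      List.Chain' (fun a b => a.2 = b.1) l → Multiset.card S ≤ l.length + n →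
      HasCycle S := by
    intro n
    induction n with
    | zero =>
      intro l hlne hle hch hcard
      obtain ⟨h, t, rfl⟩ := List.exists_cons_of_ne_nil hlne
      have hhS : h ∈ S := Multiset.mem_of_le hle (by simp)
      obtain ⟨m', hm'S, hm'2⟩ := hcon h hhS
      by_cases hc : (m' ::ₘ (↑(h :: t) : Multiset (V × V))) ≤ S
      · have := Multiset.card_le_card hc
        simp at this hcard
        omega
      · have hmem : m' ∈ h :: t := by
          by_contra hnm
          apply hc
          rw [Multiset.le_iff_count]
          intro a
          by_cases ha : a = m'
          · subst ha
            have h1 : Multiset.count a (↑(h :: t) : Multiset (V × V)) = 0 := by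
              simp [Multiset.count_eq_zero, hnm]
            have h2 : 1 ≤ Multiset.count a S := Multiset.one_le_count_iff_mem.mpr hm'S
            rw [Multiset.count_cons_self, h1]
            omega
          · rw [Multiset.count_cons_of_ne ha]
            exact Multiset.le_iff_count.mp hle a
        exact cycle_of_repeat hle hch (by simp) hmem hm'2
    | succ n ih =>
      intro l hlne hle hch hcard
      obtain ⟨h, t, rfl⟩ := List.exists_cons_of_ne_nil hlne
      have hhS : h ∈ S := Multiset.mem_of_le hle (by simp)
      obtain ⟨m', hm'S, hm'2⟩ := hcon h hhS
      by_cases hc : (m' ::ₘ (↑(h :: t) : Multiset (V × V))) ≤ S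
      · have : (↑(m' :: h :: t) : Multiset (V × V)) ≤ S := by simpa using hc
        refine ih (m' :: h :: t) (by simp) this ?_ ?_
        · exact List.isChain_cons_cons.mpr ⟨hm'2, hch⟩
        · simp at hcard ⊢
          omega
      · have hmem : m' ∈ h :: t := by
          by_contra hnm
          apply hc
          rw [Multiset.le_iff_count]
          intro a
          by_cases ha : a = m'
          · subst ha
            have h1 : Multiset.count a (↑(h :: t) : Multiset (V × V)) = 0 := by
              simp [Multiset.count_eq_zero, hnm]
            have h2 : 1 ≤ Multiset.count a S := Multiset.one_le_count_iff_mem.mpr hm'S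
            rw [Multiset.count_cons_self, h1]
            omega
          · rw [Multiset.count_cons_of_ne ha]
            exact Multiset.le_iff_count.mp hle a
        exact cycle_of_repeat hle hch (by simp) hmem hm'2
  exact key (Multiset.card S) [m₀] (by simp) (by simpa using hm₀) (List.isChain_singleton _) (by simp)


lemma applyMS_cons [DecidableEq V] (ω : V → V → ℕ) (m : V × V) (S : Multiset (V × V))
    (p : V → ℤ) (hne : m.1 ≠ m.2) :
    applyMS ω (m ::ₘ S) p = applyMS ω S (moveFn ω m p) := by
  funext w
  simp only [applyMS, moveFn, Multiset.filter_cons]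
  by_cases h1 : w = m.1
  · subst h1
    simp [hne, Ne.symm hne]
    ring
  · by_cases h2 : w = m.2
    · subst h2
      simp [h1, hne]
      push_cast
      ring
    · simp [h1, h2, Ne.symm h1, Ne.symm h2]


/-- An acyclic multiset `S` of pebbling moves can be listed as a regular
sequence; moreover if `S` is balanced with a pebble distribution `p`
(i.e. `p_S ≥ 0`), then this regular sequence is executable from `p`. -/
theorem statement1 {V : Type*} [Fintype V] [DecidableEq V]
    (G : SimpleGraph V) (hG : G.Connected)
    (ω : V → V → ℕ) (hsym : ∀ u v : V, ω u v = ω v u)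
    (hω : ∀ u v : V, G.Adj u v → 2 ≤ ω u v)
    (S : Multiset (V × V)) (hS : ∀ m ∈ S, G.Adj m.1 m.2) (hacyc : Acyclic S) :
    ∃ s : List (V × V), (↑s : Multiset (V × V)) = S ∧ RegularSeq s ∧
      ∀ p : V → ℤ, IsDistrib p → (∀ v, 0 ≤ applyMS ω S p v) → Executable G ω p s := by
  clear hG hsym hω
  revert hS hacyc
  induction S using Multiset.strongInductionOn with
  | ih S IH =>
    intro hS hacyc
    by_cases hne : S = 0
    · subst hne
      exact ⟨[], rfl, trivial, fun p _ _ => trivial⟩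
    · obtain ⟨m, hmS, hinit⟩ := exists_initial hne hacyc
      have hadj := hS m hmS
      have hne12 : m.1 ≠ m.2 := G.ne_of_adj hadj
      have hcons : m ::ₘ S.erase m = S := Multiset.cons_erase hmS
      have hlt : S.erase m < S := Multiset.erase_lt.mpr hmS
      have hacyc' : Acyclic (S.erase m) := by
        intro hcyc
        obtain ⟨l, hl1, hl2, hl3, hl4⟩ := hcyc
        exact hacyc ⟨l, hl1, le_trans hl2 (le_of_lt hlt), hl3, hl4⟩
      obtain ⟨s', hs'eq, hs'reg, hs'exe⟩ := IH (S.erase m) hlt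
        (fun m' hm' => hS m' (Multiset.mem_of_le (le_of_lt hlt) hm')) hacyc'
      refine ⟨m :: s', ?_, ⟨?_, hs'reg⟩, ?_⟩
      · show (m ::ₘ (↑s' : Multiset (V × V))) = S
        rw [hs'eq, hcons]
      · intro m' hm'
        rcases List.mem_cons.mp hm' with h | h
        · subst h
          exact hinit m' hmS
        · have : m' ∈ S.erase m := by
            rw [← hs'eq]
            exact h
          exact hinit m' (Multiset.mem_of_le (le_of_lt hlt) this)
      · intro p hp hbal
        have hin0 : S.filter (fun x => x.2 = m.1) = 0 :=
          Multiset.filter_eq_nil.mpr (fun a ha => hinit a ha)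
        have hωle : (ω m.1 m.2 : ℤ) ≤
            ((S.filter (fun x => x.1 = m.1)).map (fun x => (ω x.1 x.2 : ℤ))).sum := by
          apply Multiset.single_le_sum
          · intro x hx
            obtain ⟨a, _, rfl⟩ := Multiset.mem_map.mp hx
            positivity
          · exact Multiset.mem_map_of_mem _ (Multiset.mem_filter.mpr ⟨hmS, rfl⟩)
        have hbal1 := hbal m.1
        simp only [applyMS, hin0, Multiset.card_zero, Nat.cast_zero, add_zero] at hbal1
        have hpm : (ω m.1 m.2 : ℤ) ≤ p m.1 := by linarith
        have hmove : ∀ w, 0 ≤ moveFn ω m p w := by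
          intro w
          unfold moveFn
          split_ifs with h1 h2
          · linarith
          · linarith [hp m.2]
          · exact hp w
        refine ⟨hadj, hmove, ?_⟩
        apply hs'exe (moveFn ω m p) hmove
        intro v
        have h' : applyMS ω (m ::ₘ S.erase m) p v = applyMS ω (S.erase m) (moveFn ω m p) v := by
          rw [applyMS_cons ω m (S.erase m) p hne12]
        rw [← h', hcons]
        exact hbal v
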